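/- Let n be a positive natural number. There exist a real Banach space E of dimension n and bounded linear operators A : c → E and B : E → ℓ¹ such that A ∘ σ ∘ B is the identity map on E and ‖A‖ · ‖B‖ ≤ 2n−1. (Consequently the n-th isomorphism number of σ satisfies i_n(σ) ≥ 1/(2n−1).) Concretely, one may take E = ℝⁿ with the maximum norm, A(x)_k = x_{2k−1} for 1 ≤ k ≤ n, and B(y) = (y₁, −y₁, y₂, −y₂, …, y_{n−1}, −y_{n−1}, y_n, 0, 0, …); then ‖A‖ = 1 and ‖B‖ = 2n−1. -/

import Mathlib

noncomputable section

/-- The space `ℓ¹` of absolutely summable real sequences. -/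
abbrev ell1 : Type := lp (fun _ : ℕ => ℝ) 1

/-- The space `ℓ^∞` of bounded real sequences with the supremum norm. -/
abbrev ellInf : Type := lp (fun _ : ℕ => ℝ) ⊤

/-- The subspace of `ℓ^∞` consisting of convergent sequences. -/
def convSubspace : Submodule ℝ ellInf where
  carrier := {x | ∃ L : ℝ, Filter.Tendsto (fun k => x k) Filter.atTop (nhds L)}
  add_mem' := by
    rintro x y ⟨L, hL⟩ ⟨M, hM⟩
    exact ⟨L + M, by simpa [lp.coeFn_add, Pi.add_apply] using hL.add hM⟩
  zero_mem' :=
    ⟨0, by simpa [lp.coeFn_zero] using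
      (tendsto_const_nhds : Filter.Tendsto (fun _ : ℕ => (0:ℝ)) _ _)⟩
  smul_mem' := by
    rintro c x ⟨L, hL⟩
    exact ⟨c * L, by simpa [lp.coeFn_smul, Pi.smul_apply, smul_eq_mul] using hL.const_mul c⟩

/-- The space `c` of convergent real sequences, normed by the supremum norm. -/
abbrev cSpace : Type := ↥convSubspace

/-- `σ` is the summation operator: `σ(x)ₖ = ∑_{j=1}^k x_j` (`0`-indexed here). -/
def IsSummation (σ : ell1 →L[ℝ] cSpace) : Prop :=
  ∀ x : ell1, ∀ k : ℕ, (↑(σ x) : ellInf) k = ∑ j ∈ Finset.range (k + 1), x j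


open Finset in
/-- Auxiliary sequence `y₀, -y₀, y₁, -y₁, …, y_{n-1}, 0, 0, …`. -/
def bSeq (n : ℕ) (y : Fin n → ℝ) (j : ℕ) : ℝ :=
  if h : j < 2 * n - 1 then
    (if j % 2 = 0 then y ⟨j / 2, by omega⟩ else - y ⟨j / 2, by omega⟩) else 0

lemma bSeq_add (n : ℕ) (y z : Fin n → ℝ) (j : ℕ) :
    bSeq n (y + z) j = bSeq n y j + bSeq n z j := by
  unfold bSeq; split_ifs <;> simp <;> ring

lemma bSeq_smul (n : ℕ) (c : ℝ) (y : Fin n → ℝ) (j : ℕ) :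
    bSeq n (c • y) j = c * bSeq n y j := by
  unfold bSeq; split_ifs <;> simp

lemma bSeq_eq_zero (n : ℕ) (y : Fin n → ℝ) (j : ℕ) (hj : j ∉ Finset.range (2 * n - 1)) :
    bSeq n y j = 0 := by
  rw [Finset.mem_range, not_lt] at hj
  unfold bSeq
  rw [dif_neg (by omega)]

lemma bSeq_abs_le (n : ℕ) (y : PiLp ⊤ fun _ : Fin n => ℝ) (j : ℕ) :
    ‖bSeq n y j‖ ≤ ‖y‖ := by
  have hb : ∀ i : Fin n, ‖y i‖ ≤ ‖y‖ := by
    intro i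
    rw [PiLp.norm_eq_ciSup]
    exact le_ciSup (f := fun i : Fin n => ‖y i‖) (Set.Finite.bddAbove (Set.finite_range _)) i
  unfold bSeq
  split_ifs with h h2
  · exact hb _
  · rw [norm_neg]; exact hb _
  · rw [norm_zero]; exact norm_nonneg y

lemma bSeq_summable (n : ℕ) (y : Fin n → ℝ) : Summable fun j => ‖bSeq n y j‖ :=
  summable_of_ne_finset_zero (s := Finset.range (2 * n - 1))
    (fun j hj => by rw [bSeq_eq_zero n y j hj, norm_zero])

lemma bSeq_memℓp (n : ℕ) (y : Fin n → ℝ) : Memℓp (bSeq n y) 1 := by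
  apply memℓp_gen
  simpa using bSeq_summable n y

lemma bSeq_partial_sum (n : ℕ) (y : Fin n → ℝ) (i : ℕ) (hi : i < n) :
    ∑ j ∈ Finset.range (2 * i + 1), bSeq n y j = y ⟨i, hi⟩ := by
  induction i with
  | zero =>
      simp only [Nat.mul_zero, Nat.zero_add, Finset.sum_range_one]
      unfold bSeq
      rw [dif_pos (by omega)]
      norm_num
  | succ i ih =>
      have h1 : 2 * (i + 1) + 1 = (2 * i + 1) + 1 + 1 := by ring
      rw [h1, Finset.sum_range_succ, Finset.sum_range_succ, ih (by omega)]
      have hb1 : bSeq n y (2 * i + 1) = - y ⟨i, by omega⟩ := by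
        unfold bSeq
        rw [dif_pos (by omega), if_neg (by omega)]
        have h2 : (2 * i + 1) / 2 = i := by omega
        simp only [h2]
      have hb2 : bSeq n y (2 * i + 1 + 1) = y ⟨i + 1, hi⟩ := by
        unfold bSeq
        rw [dif_pos (by omega), if_pos (by omega)]
        have h2 : (2 * i + 1 + 1) / 2 = i + 1 := by omega
        simp only [h2]
      rw [hb1, hb2]
      ring

/-- Lower bound for the isomorphism numbers of the summation operator: there exist an
`n`-dimensional Banach space `E` and bounded operators `A : c → E`, `B : E → ℓ¹`
with `A ∘ σ ∘ B = id_E` and `‖A‖ ⬝ ‖B‖ ≤ 2n - 1`. -/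
theorem isomorphism_factorization_summation (n : ℕ) (hn : 1 ≤ n)
    (σ : ell1 →L[ℝ] cSpace) (hσ : IsSummation σ) :
    ∃ (E : Type) (_ : NormedAddCommGroup E) (_ : NormedSpace ℝ E) (_ : CompleteSpace E),
      Module.finrank ℝ E = n ∧
      ∃ (A : cSpace →L[ℝ] E) (B : E →L[ℝ] ell1),
        A.comp (σ.comp B) = ContinuousLinearMap.id ℝ E ∧ ‖A‖ * ‖B‖ ≤ 2 * n - 1 := by
  haveI : Nonempty (Fin n) := ⟨⟨0, hn⟩⟩
  refine ⟨PiLp ⊤ (fun _ : Fin n => ℝ), inferInstance, inferInstance, inferInstance, ?_, ?_⟩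
  · rw [(WithLp.linearEquiv ⊤ ℝ (Fin n → ℝ)).finrank_eq]; simp
  set E := PiLp ⊤ (fun _ : Fin n => ℝ) with hE
  let Alin : cSpace →ₗ[ℝ] E :=
    { toFun := fun x => WithLp.toLp ⊤ (fun i : Fin n => (↑(x : ellInf) : ℕ → ℝ) (2 * i))
      map_add' := by
        intro x y
        ext i
        show (↑(↑(x + y) : ellInf) : ℕ → ℝ) (2 * ↑i)
          = (↑(↑x : ellInf) : ℕ → ℝ) (2 * ↑i) + (↑(↑y : ellInf) : ℕ → ℝ) (2 * ↑i)
        simp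
      map_smul' := by
        intro c x
        ext i
        show (↑(↑(c • x) : ellInf) : ℕ → ℝ) (2 * ↑i) = c * (↑(↑x : ellInf) : ℕ → ℝ) (2 * ↑i)
        simp }
  have hAbound : ∀ x : cSpace, ‖Alin x‖ ≤ 1 * ‖x‖ := by
    intro x
    rw [one_mul, PiLp.norm_eq_ciSup]
    apply ciSup_le
    intro i
    have := lp.norm_apply_le_norm (E := fun _ : ℕ => ℝ) (p := ⊤)
      ENNReal.top_ne_zero (x : ellInf) (2 * i)
    exact this
  let A : cSpace →L[ℝ] E := Alin.mkContinuous 1 hAbound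
  let Blin : E →ₗ[ℝ] ell1 :=
    { toFun := fun y => ⟨bSeq n y, bSeq_memℓp n y⟩
      map_add' := by
        intro y z
        apply Subtype.ext
        funext j
        exact bSeq_add n y z j
      map_smul' := by
        intro c y
        apply Subtype.ext
        funext j
        exact bSeq_smul n c y j }
  have hBcoe : ∀ (y : E) (j : ℕ), (↑(Blin y) : ℕ → ℝ) j = bSeq n y j := fun _ _ => rfl
  have hBbound : ∀ y : E, ‖Blin y‖ ≤ (2 * n - 1) * ‖y‖ := by
    intro y
    have h1 : ‖Blin y‖ = ∑' j, ‖bSeq n y j‖ := by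
      rw [lp.norm_eq_tsum_rpow (by norm_num) (Blin y)]
      simp only [hBcoe]
      norm_num
    rw [h1, tsum_eq_sum (s := Finset.range (2 * n - 1))
      (fun j hj => by rw [bSeq_eq_zero n y j hj, norm_zero])]
    calc ∑ j ∈ Finset.range (2 * n - 1), ‖bSeq n y j‖
        ≤ ∑ _j ∈ Finset.range (2 * n - 1), ‖y‖ :=
          Finset.sum_le_sum (fun j _ => bSeq_abs_le n y j)
      _ = ((2 * n - 1 : ℕ) : ℝ) * ‖y‖ := by
          rw [Finset.sum_const, Finset.card_range, nsmul_eq_mul]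
      _ ≤ (2 * n - 1 : ℝ) * ‖y‖ := by
          apply mul_le_mul_of_nonneg_right _ (norm_nonneg y)
          push_cast [Nat.cast_sub (by omega : 1 ≤ 2 * n)]
          norm_num
  have h2n1 : (0:ℝ) ≤ 2 * n - 1 := by
    have : (1:ℝ) ≤ n := by exact_mod_cast hn
    linarith
  let B : E →L[ℝ] ell1 := Blin.mkContinuous (2 * n - 1) hBbound
  refine ⟨A, B, ?_, ?_⟩
  · ext y i
    show Alin (σ (Blin y)) i = y i
    calc Alin (σ (Blin y)) i = (↑(σ (Blin y)) : ellInf) (2 * ↑i) := rfl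
      _ = ∑ j ∈ Finset.range (2 * ↑i + 1), (↑(Blin y) : ℕ → ℝ) j := hσ (Blin y) (2 * ↑i)
      _ = ∑ j ∈ Finset.range (2 * ↑i + 1), bSeq n y j := by simp only [hBcoe]
      _ = y ⟨↑i, i.2⟩ := bSeq_partial_sum n y i i.2
      _ = y i := by simp
  · calc ‖A‖ * ‖B‖ ≤ 1 * (2 * n - 1) :=
          mul_le_mul (Alin.mkContinuous_norm_le zero_le_one hAbound)
            (Blin.mkContinuous_norm_le h2n1 hBbound) (norm_nonneg B) zero_le_one
      _ = 2 * n - 1 := one_mul _
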